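/- Let β = ‖C₀‖·‖A‖·‖(Γ + AC₀A*)⁻¹‖·‖M‖ and suppose 0 ≤ δ < 1/β. Let C(δ) be the unique bounded self-adjoint non-negative fixed point of F(·,δ), define the covariance iterates C₀(δ) = C₀, C_{ℓ+1}(δ) = F(C_ℓ(δ),δ), the mean iterates m₀(δ) = m₀, m_{ℓ+1}(δ) = m₀ + K(C_ℓ(δ),δ)(b − Am₀ − δ M m_ℓ(δ)), and the limiting affine map G(m,δ) = m₀ + K(C(δ),δ)(b − Am₀ − δ M m). Then there exists a unique m(δ) ∈ X with m(δ) = G(m(δ),δ), and there is a constant α₂ > 0 such that ‖m_ℓ(δ) − m(δ)‖ ≤ α₂ (βδ)^ℓ for all ℓ ≥ 1; in particular the sequence of means converges geometrically fast. -/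

import Mathlib

open ContinuousLinearMap
open scoped RealInnerProductSpace

/-- The operator `K(B,δ) = C₀ A* (Γ + δ² M B M* + A C₀ A*)⁻¹ : Y → X`. -/
noncomputable def Kop {X Y : Type*}
    [NormedAddCommGroup X] [InnerProductSpace ℝ X] [CompleteSpace X]
    [NormedAddCommGroup Y] [InnerProductSpace ℝ Y] [FiniteDimensional ℝ Y]
    (A M : X →L[ℝ] Y) (C₀ : X →L[ℝ] X) (Γ : Y →L[ℝ] Y)
    (B : X →L[ℝ] X) (δ : ℝ) : Y →L[ℝ] X :=
  C₀ ∘L (adjoint A) ∘L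
    Ring.inverse (Γ + δ ^ 2 • (M ∘L B ∘L adjoint M) + A ∘L C₀ ∘L adjoint A)

/-- The map `F(B,δ) = C₀ − K(B,δ) A C₀`. -/
noncomputable def Fop {X Y : Type*}
    [NormedAddCommGroup X] [InnerProductSpace ℝ X] [CompleteSpace X]
    [NormedAddCommGroup Y] [InnerProductSpace ℝ Y] [FiniteDimensional ℝ Y]
    (A M : X →L[ℝ] Y) (C₀ : X →L[ℝ] X) (Γ : Y →L[ℝ] Y)
    (B : X →L[ℝ] X) (δ : ℝ) : X →L[ℝ] X :=
  C₀ - (Kop A M C₀ Γ B δ) ∘L A ∘L C₀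

/-- The covariance iterates `C₀(δ) = C₀`, `C_{ℓ+1}(δ) = F(C_ℓ(δ),δ)`. -/
noncomputable def covIter {X Y : Type*}
    [NormedAddCommGroup X] [InnerProductSpace ℝ X] [CompleteSpace X]
    [NormedAddCommGroup Y] [InnerProductSpace ℝ Y] [FiniteDimensional ℝ Y]
    (A M : X →L[ℝ] Y) (C₀ : X →L[ℝ] X) (Γ : Y →L[ℝ] Y) (δ : ℝ) : ℕ → (X →L[ℝ] X)
  | 0 => C₀
  | (n + 1) => Fop A M C₀ Γ (covIter A M C₀ Γ δ n) δ

/-- The mean iterates `m₀(δ) = m₀`, `m_{ℓ+1}(δ) = m₀ + K(C_ℓ(δ),δ)(b − A m₀ − δ M m_ℓ(δ))`. -/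
noncomputable def meanIter {X Y : Type*}
    [NormedAddCommGroup X] [InnerProductSpace ℝ X] [CompleteSpace X]
    [NormedAddCommGroup Y] [InnerProductSpace ℝ Y] [FiniteDimensional ℝ Y]
    (A M : X →L[ℝ] Y) (C₀ : X →L[ℝ] X) (Γ : Y →L[ℝ] Y)
    (m₀ : X) (b : Y) (δ : ℝ) : ℕ → X
  | 0 => m₀
  | (n + 1) => m₀ + (Kop A M C₀ Γ (covIter A M C₀ Γ δ n) δ)
      (b - A m₀ - δ • M (meanIter A M C₀ Γ m₀ b δ n))


set_option synthInstance.maxHeartbeats 1000000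
set_option maxHeartbeats 1000000

open ContinuousLinearMap
open scoped RealInnerProductSpace

section AuxGeneric

variable {E : Type*} [NormedAddCommGroup E] [InnerProductSpace ℝ E] [CompleteSpace E]

lemma pos_inner_nonneg' {T : E →L[ℝ] E} (hT : T.IsPositive) (x : E) :
    0 ≤ ⟪T x, x⟫ := by
  simpa [ContinuousLinearMap.reApplyInnerSelf] using hT.2 x

lemma sa_inner' {T : E →L[ℝ] E} (hT : IsSelfAdjoint T) (u v : E) :
    ⟪T u, v⟫ = ⟪u, T v⟫ := by
  nth_rewrite 1 [← hT.adjoint_eq]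
  exact adjoint_inner_left T v u

lemma pos_inner_sq_le' {T : E →L[ℝ] E} (hT : T.IsPositive) (u v : E) :
    ⟪T u, v⟫ ^ 2 ≤ ⟪T u, u⟫ * ⟪T v, v⟫ := by
  have key : ∀ t : ℝ, 0 ≤ ⟪T v, v⟫ * (t * t) + 2 * ⟪T u, v⟫ * t + ⟪T u, u⟫ := by
    intro t
    have h0 := pos_inner_nonneg' hT (u + t • v)
    have hsym : ⟪T v, u⟫ = ⟪T u, v⟫ := by
      rw [sa_inner' hT.isSelfAdjoint, real_inner_comm]
    have hexp : ⟪T (u + t • v), u + t • v⟫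
        = ⟪T u, u⟫ + t * ⟪T u, v⟫ + t * ⟪T v, u⟫ + t ^ 2 * ⟪T v, v⟫ := by
      rw [map_add, map_smul, inner_add_left, inner_add_right, inner_add_right,
        real_inner_smul_left, real_inner_smul_left, real_inner_smul_right,
        real_inner_smul_right]
      ring
    rw [hexp, hsym] at h0
    nlinarith
  have hd := discrim_le_zero key
  rw [discrim] at hd
  nlinarith

end AuxGeneric

section AuxFin

variable {Y : Type*} [NormedAddCommGroup Y] [InnerProductSpace ℝ Y] [FiniteDimensional ℝ Y]

lemma isUnit_of_posdef' {T : Y →L[ℝ] Y} (h : ∀ y : Y, y ≠ 0 → 0 < ⟪T y, y⟫) :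
    IsUnit T := by
  rw [ContinuousLinearMap.isUnit_iff_bijective]
  have hinj : Function.Injective T := by
    intro a b hab
    by_contra hne
    have h1 : T (a - b) = 0 := by rw [map_sub, hab, sub_self]
    have h2 := h (a - b) (sub_ne_zero.mpr hne)
    rw [h1] at h2
    simp at h2
  exact ⟨hinj, (LinearMap.injective_iff_surjective (f := (T : Y →ₗ[ℝ] Y))).mp hinj⟩

lemma ringInverse_isPositive' {T : Y →L[ℝ] Y} (hT : T.IsPositive) (hU : IsUnit T) :
    (Ring.inverse T).IsPositive := by
  have h1 : T * Ring.inverse T = 1 := Ring.mul_inverse_cancel T hU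
  have hs : star (Ring.inverse T) * T = 1 := by
    calc star (Ring.inverse T) * T = star (star T * Ring.inverse T) := by
          rw [star_mul, star_star]
      _ = star (T * Ring.inverse T) := by rw [hT.isSelfAdjoint.star_eq]
      _ = 1 := by rw [h1, star_one]
  have hsa : IsSelfAdjoint (Ring.inverse T) := by
    show star (Ring.inverse T) = Ring.inverse T
    calc star (Ring.inverse T) = star (Ring.inverse T) * (T * Ring.inverse T) := by
          rw [h1, mul_one]
      _ = star (Ring.inverse T) * T * Ring.inverse T := by rw [mul_assoc]
      _ = Ring.inverse T := by rw [hs, one_mul]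
  refine ⟨isSelfAdjoint_iff_isSymmetric.mp hsa, fun y => ?_⟩
  have hTy : T (Ring.inverse T y) = y := by
    rw [← ContinuousLinearMap.mul_apply, h1, ContinuousLinearMap.one_apply]
  have hre : ContinuousLinearMap.reApplyInnerSelf (Ring.inverse T) y
      = ⟪Ring.inverse T y, y⟫ := by
    simp [ContinuousLinearMap.reApplyInnerSelf]
  have h3 : 0 ≤ ⟪T (Ring.inverse T y), Ring.inverse T y⟫ := by
    simpa [ContinuousLinearMap.reApplyInnerSelf] using hT.2 (Ring.inverse T y)
  rw [hTy] at h3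
  rw [hre, real_inner_comm]
  exact h3

end AuxFin

section AuxFin2

variable {Y : Type*} [NormedAddCommGroup Y] [InnerProductSpace ℝ Y] [FiniteDimensional ℝ Y]

lemma smul_isPositive' {E : Type*} [NormedAddCommGroup E] [InnerProductSpace ℝ E]
    [CompleteSpace E] {P : E →L[ℝ] E} {c : ℝ} (hc : 0 ≤ c) (hP : P.IsPositive) :
    (c • P).IsPositive := by
  constructor
  · rw [← isSelfAdjoint_iff_isSymmetric]
    show star (c • P) = c • P
    rw [star_smul, star_trivial, hP.isSelfAdjoint.star_eq]
  · intro x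
    have : ContinuousLinearMap.reApplyInnerSelf (c • P) x = c * ⟪P x, x⟫ := by
      simp [ContinuousLinearMap.reApplyInnerSelf, real_inner_smul_left]
    rw [this]
    exact mul_nonneg hc (pos_inner_nonneg' hP x)

lemma norm_sq_le_inv_mul_inner' {T : Y →L[ℝ] Y} (hT : T.IsPositive) (hU : IsUnit T)
    (x : Y) : ‖x‖ ^ 2 ≤ ‖Ring.inverse T‖ * ⟪T x, x⟫ := by
  set R := Ring.inverse T with hR
  have hTR : T (R x) = x := by
    rw [← ContinuousLinearMap.mul_apply, Ring.mul_inverse_cancel T hU,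
      ContinuousLinearMap.one_apply]
  have hcs := pos_inner_sq_le' hT x (R x)
  have h1 : ⟪T x, R x⟫ = ‖x‖ ^ 2 := by
    rw [sa_inner' hT.isSelfAdjoint, hTR, real_inner_self_eq_norm_sq]
  have h2 : ⟪T (R x), R x⟫ ≤ ‖R‖ * ‖x‖ ^ 2 := by
    rw [hTR]
    calc ⟪x, R x⟫ ≤ ‖x‖ * ‖R x‖ := real_inner_le_norm x (R x)
      _ ≤ ‖x‖ * (‖R‖ * ‖x‖) := by
          have := R.le_opNorm x
          exact mul_le_mul_of_nonneg_left this (norm_nonneg x)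
      _ = ‖R‖ * ‖x‖ ^ 2 := by ring
  rw [h1] at hcs
  have hTx := pos_inner_nonneg' hT x
  by_cases hx : x = 0
  · simp [hx]
  · have hxpos : 0 < ‖x‖ := norm_pos_iff.mpr hx
    have h4 : (‖x‖ ^ 2) ^ 2 ≤ ⟪T x, x⟫ * (‖R‖ * ‖x‖ ^ 2) :=
      le_trans hcs (mul_le_mul_of_nonneg_left h2 hTx)
    nlinarith [mul_pos hxpos hxpos]

lemma ringInverse_norm_mono' {S T : Y →L[ℝ] Y} (hT : T.IsPositive) (hTU : IsUnit T)
    (hSU : IsUnit S) (hd : (S - T).IsPositive) :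
    ‖Ring.inverse S‖ ≤ ‖Ring.inverse T‖ := by
  refine ContinuousLinearMap.opNorm_le_bound _ (norm_nonneg _) fun y => ?_
  set x := Ring.inverse S y with hx
  have hSx : S x = y := by
    rw [hx, ← ContinuousLinearMap.mul_apply, Ring.mul_inverse_cancel S hSU,
      ContinuousLinearMap.one_apply]
  have h1 : ‖x‖ ^ 2 ≤ ‖Ring.inverse T‖ * ⟪T x, x⟫ := norm_sq_le_inv_mul_inner' hT hTU x
  have h2 : ⟪T x, x⟫ ≤ ⟪S x, x⟫ := by
    have h0 := pos_inner_nonneg' hd x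
    rw [ContinuousLinearMap.sub_apply, inner_sub_left] at h0
    linarith
  have h3 : ⟪S x, x⟫ ≤ ‖y‖ * ‖x‖ := by
    rw [hSx]
    exact real_inner_le_norm y x
  have hτ : (0:ℝ) ≤ ‖Ring.inverse T‖ := norm_nonneg _
  by_cases hx0 : ‖x‖ = 0
  · rw [hx0]
    positivity
  · have hxpos : 0 < ‖x‖ := lt_of_le_of_ne (norm_nonneg _) (Ne.symm hx0)
    nlinarith [mul_nonneg hτ (norm_nonneg y)]

end AuxFin2

section KF

variable {X Y : Type*}
    [NormedAddCommGroup X] [InnerProductSpace ℝ X] [CompleteSpace X]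
    [NormedAddCommGroup Y] [InnerProductSpace ℝ Y] [FiniteDimensional ℝ Y]
    (A M : X →L[ℝ] Y) (C₀ : X →L[ℝ] X) (Γ : Y →L[ℝ] Y)

noncomputable def Sop (B : X →L[ℝ] X) (δ : ℝ) : Y →L[ℝ] Y :=
  Γ + δ ^ 2 • (M ∘L B ∘L adjoint M) + A ∘L C₀ ∘L adjoint A

noncomputable def Topop : Y →L[ℝ] Y := Γ + A ∘L C₀ ∘L adjoint A

lemma Kop_eq (B : X →L[ℝ] X) (δ : ℝ) :
    Kop A M C₀ Γ B δ = C₀ ∘L (adjoint A) ∘L Ring.inverse (Sop A M C₀ Γ B δ) := rfl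

variable {A M C₀ Γ}
variable (hC₀ : C₀.IsPositive) (hΓ : Γ.IsPositive)
    (hΓpos : ∀ y : Y, y ≠ 0 → 0 < ⟪Γ y, y⟫)

include hC₀ hΓ in
lemma Sop_isPositive {B : X →L[ℝ] X} (hB : B.IsPositive) (δ : ℝ) :
    (Sop A M C₀ Γ B δ).IsPositive :=
  (hΓ.add (smul_isPositive' (sq_nonneg δ) (hB.conj_adjoint M))).add (hC₀.conj_adjoint A)

include hC₀ hΓpos in
lemma Sop_posdef {B : X →L[ℝ] X} (hB : B.IsPositive) (δ : ℝ) :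
    ∀ y : Y, y ≠ 0 → 0 < ⟪(Sop A M C₀ Γ B δ) y, y⟫ := by
  intro y hy
  have h1 := hΓpos y hy
  have h2 := pos_inner_nonneg' (smul_isPositive' (sq_nonneg δ) (hB.conj_adjoint M)) y
  have h3 := pos_inner_nonneg' (hC₀.conj_adjoint A) y
  have he : (Sop A M C₀ Γ B δ) y
      = Γ y + (δ ^ 2 • (M ∘L B ∘L adjoint M)) y + (A ∘L C₀ ∘L adjoint A) y := by
    simp [Sop, ContinuousLinearMap.add_apply]
  rw [he, inner_add_left, inner_add_left]
  linarith

include hC₀ hΓpos in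
lemma Sop_isUnit {B : X →L[ℝ] X} (hB : B.IsPositive) (δ : ℝ) :
    IsUnit (Sop A M C₀ Γ B δ) :=
  isUnit_of_posdef' (Sop_posdef hC₀ hΓpos hB δ)

include hC₀ hΓ in
lemma Top_isPositive : (Topop A C₀ Γ).IsPositive := hΓ.add (hC₀.conj_adjoint A)

include hC₀ hΓpos in
lemma Top_isUnit : IsUnit (Topop A C₀ Γ) := by
  apply isUnit_of_posdef'
  intro y hy
  have h1 := hΓpos y hy
  have h3 := pos_inner_nonneg' (hC₀.conj_adjoint A) y
  have he : (Topop A C₀ Γ) y = Γ y + (A ∘L C₀ ∘L adjoint A) y := by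
    simp [Topop, ContinuousLinearMap.add_apply]
  rw [he, inner_add_left]
  linarith

include hC₀ hΓ hΓpos in
lemma ringInverse_Sop_norm_le {B : X →L[ℝ] X} (hB : B.IsPositive) (δ : ℝ) :
    ‖Ring.inverse (Sop A M C₀ Γ B δ)‖ ≤ ‖Ring.inverse (Topop A C₀ Γ)‖ := by
  refine ringInverse_norm_mono' (Top_isPositive hC₀ hΓ) (Top_isUnit hC₀ hΓpos)
    (Sop_isUnit hC₀ hΓpos hB δ) ?_
  have he : Sop A M C₀ Γ B δ - Topop A C₀ Γ = δ ^ 2 • (M ∘L B ∘L adjoint M) := by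
    rw [Sop, Topop]; abel
  rw [he]
  exact smul_isPositive' (sq_nonneg δ) (hB.conj_adjoint M)

include hC₀ hΓ hΓpos in
lemma Kop_norm_le {B : X →L[ℝ] X} (hB : B.IsPositive) (δ : ℝ) :
    ‖Kop A M C₀ Γ B δ‖ ≤ ‖C₀‖ * ‖A‖ * ‖Ring.inverse (Topop A C₀ Γ)‖ := by
  rw [Kop_eq]
  calc ‖C₀ ∘L (adjoint A) ∘L Ring.inverse (Sop A M C₀ Γ B δ)‖
      ≤ ‖C₀‖ * ‖(adjoint A) ∘L Ring.inverse (Sop A M C₀ Γ B δ)‖ :=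
        ContinuousLinearMap.opNorm_comp_le _ _
    _ ≤ ‖C₀‖ * (‖adjoint A‖ * ‖Ring.inverse (Sop A M C₀ Γ B δ)‖) := by
        have := ContinuousLinearMap.opNorm_comp_le (adjoint A)
          (Ring.inverse (Sop A M C₀ Γ B δ))
        exact mul_le_mul_of_nonneg_left this (norm_nonneg _)
    _ ≤ ‖C₀‖ * (‖A‖ * ‖Ring.inverse (Topop A C₀ Γ)‖) := by
        rw [adjoint.norm_map A]
        have := ringInverse_Sop_norm_le (A := A) (M := M) hC₀ hΓ hΓpos hB δ
        have h2 : ‖A‖ * ‖Ring.inverse (Sop A M C₀ Γ B δ)‖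
            ≤ ‖A‖ * ‖Ring.inverse (Topop A C₀ Γ)‖ :=
          mul_le_mul_of_nonneg_left this (norm_nonneg _)
        exact mul_le_mul_of_nonneg_left h2 (norm_nonneg _)
    _ = ‖C₀‖ * ‖A‖ * ‖Ring.inverse (Topop A C₀ Γ)‖ := by ring

end KF

section KF2

variable {X Y : Type*}
    [NormedAddCommGroup X] [InnerProductSpace ℝ X] [CompleteSpace X]
    [NormedAddCommGroup Y] [InnerProductSpace ℝ Y] [FiniteDimensional ℝ Y]
    {A M : X →L[ℝ] Y} {C₀ : X →L[ℝ] X} {Γ : Y →L[ℝ] Y}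

variable (hC₀ : C₀.IsPositive) (hΓ : Γ.IsPositive)
    (hΓpos : ∀ y : Y, y ≠ 0 → 0 < ⟪Γ y, y⟫)

include hC₀ hΓ hΓpos in
lemma Fop'_isPositive {B : X →L[ℝ] X} (hB : B.IsPositive) (δ : ℝ) :
    (C₀ - Kop A M C₀ Γ B δ ∘L A ∘L C₀).IsPositive := by
  set S := Sop A M C₀ Γ B δ with hS
  have hSU : IsUnit S := Sop_isUnit hC₀ hΓpos hB δ
  have hSpos : S.IsPositive := Sop_isPositive hC₀ hΓ hB δ
  have hRpos : (Ring.inverse S).IsPositive := ringInverse_isPositive' hSpos hSU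
  have hadj : adjoint (C₀ ∘L adjoint A) = A ∘L C₀ := by
    rw [adjoint_comp, adjoint_adjoint, hC₀.isSelfAdjoint.adjoint_eq]
  have hW : Kop A M C₀ Γ B δ ∘L A ∘L C₀
      = (C₀ ∘L adjoint A) ∘L Ring.inverse S ∘L adjoint (C₀ ∘L adjoint A) := by
    rw [hadj]; rfl
  have hWpos := hRpos.conj_adjoint (C₀ ∘L adjoint A)
  refine ⟨(hC₀.1).sub (hW ▸ hWpos).1, fun x => ?_⟩
  have hrw : ContinuousLinearMap.reApplyInnerSelf
        (C₀ - Kop A M C₀ Γ B δ ∘L A ∘L C₀) x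
      = ⟪C₀ x, x⟫ - ⟪(Kop A M C₀ Γ B δ ∘L A ∘L C₀) x, x⟫ := by
    simp [ContinuousLinearMap.reApplyInnerSelf, ContinuousLinearMap.sub_apply,
      inner_sub_left]
  rw [hrw]
  set y := Ring.inverse S (A (C₀ x)) with hy
  have hKx : (Kop A M C₀ Γ B δ ∘L A ∘L C₀) x = C₀ (adjoint A y) := rfl
  have hSy : S y = A (C₀ x) := by
    rw [hy, ← ContinuousLinearMap.mul_apply, Ring.mul_inverse_cancel S hSU,
      ContinuousLinearMap.one_apply]
  have ht : ⟪(Kop A M C₀ Γ B δ ∘L A ∘L C₀) x, x⟫ = ⟪S y, y⟫ := by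
    rw [hKx]
    calc ⟪C₀ (adjoint A y), x⟫ = ⟪adjoint A y, C₀ x⟫ := sa_inner' hC₀.isSelfAdjoint _ _
      _ = ⟪y, A (C₀ x)⟫ := adjoint_inner_left A (C₀ x) y
      _ = ⟪y, S y⟫ := by rw [hSy]
      _ = ⟪S y, y⟫ := real_inner_comm _ _
  have hc : ⟪(A ∘L C₀ ∘L adjoint A) y, y⟫ ≤ ⟪S y, y⟫ := by
    have h0 := pos_inner_nonneg'
      (hΓ.add (smul_isPositive' (sq_nonneg δ) (hB.conj_adjoint M))) y
    have he : S y = (Γ + δ ^ 2 • (M ∘L B ∘L adjoint M)) y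
        + (A ∘L C₀ ∘L adjoint A) y := by
      rw [hS]
      simp [Sop, ContinuousLinearMap.add_apply]
    rw [he, inner_add_left]
    linarith
  have hcc : ⟪(A ∘L C₀ ∘L adjoint A) y, y⟫ = ⟪C₀ (adjoint A y), adjoint A y⟫ := by
    have : (A ∘L C₀ ∘L adjoint A) y = A (C₀ (adjoint A y)) := rfl
    rw [this]
    exact (adjoint_inner_right A (C₀ (adjoint A y)) y).symm
  have hq := pos_inner_nonneg' hC₀ (x - adjoint A y)
  rw [map_sub, inner_sub_left, inner_sub_right, inner_sub_right] at hq
  have ha1 : ⟪C₀ x, adjoint A y⟫ = ⟪S y, y⟫ := by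
    rw [adjoint_inner_right A (C₀ x) y, ← hSy]
  have ha2 : ⟪C₀ (adjoint A y), x⟫ = ⟪S y, y⟫ := by
    rw [sa_inner' hC₀.isSelfAdjoint, real_inner_comm, ← ha1]
  rw [ht]
  rw [ha1, ha2] at hq
  rw [hcc] at hc
  linarith

lemma Kop_comp_eq (B : X →L[ℝ] X) (δ : ℝ) :
    Kop A M C₀ Γ B δ = (C₀ ∘L adjoint A) ∘L Ring.inverse (Sop A M C₀ Γ B δ) := rfl

include hC₀ hΓ hΓpos in
lemma Kop_sub_norm_le {B C : X →L[ℝ] X} (hB : B.IsPositive) (hC : C.IsPositive) (δ : ℝ) :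
    ‖Kop A M C₀ Γ B δ - Kop A M C₀ Γ C δ‖
      ≤ ‖C₀‖ * ‖A‖ * ‖Ring.inverse (Topop A C₀ Γ)‖ * ‖M‖ * δ *
        (δ * ‖M‖ * ‖Ring.inverse (Topop A C₀ Γ)‖ * ‖C - B‖) := by
  set τ := ‖Ring.inverse (Topop A C₀ Γ)‖ with hτ
  set RB := Ring.inverse (Sop A M C₀ Γ B δ) with hRB
  set RC := Ring.inverse (Sop A M C₀ Γ C δ) with hRC
  have hSBU : IsUnit (Sop A M C₀ Γ B δ) := Sop_isUnit hC₀ hΓpos hB δ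
  have hSCU : IsUnit (Sop A M C₀ Γ C δ) := Sop_isUnit hC₀ hΓpos hC δ
  have hRBn : ‖RB‖ ≤ τ := ringInverse_Sop_norm_le (A := A) (M := M) hC₀ hΓ hΓpos hB δ
  have hRCn : ‖RC‖ ≤ τ := ringInverse_Sop_norm_le (A := A) (M := M) hC₀ hΓ hΓpos hC δ
  have hmid : M ∘L (C - B) ∘L adjoint M
      = M ∘L C ∘L adjoint M - M ∘L B ∘L adjoint M := by
    rw [sub_comp, comp_sub]
  have hSdiff : Sop A M C₀ Γ C δ - Sop A M C₀ Γ B δ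
      = δ ^ 2 • (M ∘L (C - B) ∘L adjoint M) := by
    rw [hmid, smul_sub]
    rw [Sop, Sop]
    abel
  have h1 : RB - RC = RB * (δ ^ 2 • (M ∘L (C - B) ∘L adjoint M)) * RC := by
    rw [← hSdiff]
    calc RB - RC
        = RB * (Sop A M C₀ Γ C δ * RC) - (RB * Sop A M C₀ Γ B δ) * RC := by
          rw [Ring.mul_inverse_cancel _ hSCU, Ring.inverse_mul_cancel _ hSBU,
            mul_one, one_mul]
      _ = RB * (Sop A M C₀ Γ C δ - Sop A M C₀ Γ B δ) * RC := by
          noncomm_ring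
  have e1 : Kop A M C₀ Γ B δ - Kop A M C₀ Γ C δ
      = (C₀ ∘L adjoint A) ∘L (RB - RC) := by
    rw [ContinuousLinearMap.comp_sub]; rfl
  rw [e1, h1]
  have hZ : ‖δ ^ 2 • (M ∘L (C - B) ∘L adjoint M)‖ ≤ δ ^ 2 * (‖M‖ * (‖C - B‖ * ‖M‖)) := by
    rw [norm_smul (δ ^ 2) (M ∘L (C - B) ∘L adjoint M), Real.norm_eq_abs,
      abs_of_nonneg (sq_nonneg δ)]
    have h2 : ‖M ∘L (C - B) ∘L adjoint M‖ ≤ ‖M‖ * (‖C - B‖ * ‖M‖) := by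
      calc ‖M ∘L (C - B) ∘L adjoint M‖ ≤ ‖M‖ * ‖(C - B) ∘L adjoint M‖ :=
            ContinuousLinearMap.opNorm_comp_le _ _
        _ ≤ ‖M‖ * (‖C - B‖ * ‖adjoint M‖) := by
            have := ContinuousLinearMap.opNorm_comp_le (C - B) (adjoint M)
            exact mul_le_mul_of_nonneg_left this (norm_nonneg _)
        _ = ‖M‖ * (‖C - B‖ * ‖M‖) := by rw [adjoint.norm_map M]
    exact mul_le_mul_of_nonneg_left h2 (sq_nonneg δ)
  calc ‖(C₀ ∘L adjoint A) ∘L (RB * (δ ^ 2 • (M ∘L (C - B) ∘L adjoint M)) * RC)‖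
      ≤ ‖C₀ ∘L adjoint A‖ * ‖RB * (δ ^ 2 • (M ∘L (C - B) ∘L adjoint M)) * RC‖ :=
        ContinuousLinearMap.opNorm_comp_le _ _
    _ ≤ (‖C₀‖ * ‖A‖) * (‖RB‖ * ‖δ ^ 2 • (M ∘L (C - B) ∘L adjoint M)‖ * ‖RC‖) := by
        have hA1 : ‖C₀ ∘L adjoint A‖ ≤ ‖C₀‖ * ‖A‖ := by
          calc ‖C₀ ∘L adjoint A‖ ≤ ‖C₀‖ * ‖adjoint A‖ :=
                ContinuousLinearMap.opNorm_comp_le _ _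
            _ = ‖C₀‖ * ‖A‖ := by rw [adjoint.norm_map A]
        have hA2 : ‖RB * (δ ^ 2 • (M ∘L (C - B) ∘L adjoint M)) * RC‖
            ≤ ‖RB‖ * ‖δ ^ 2 • (M ∘L (C - B) ∘L adjoint M)‖ * ‖RC‖ := by
          calc ‖RB * (δ ^ 2 • (M ∘L (C - B) ∘L adjoint M)) * RC‖
              ≤ ‖RB * (δ ^ 2 • (M ∘L (C - B) ∘L adjoint M))‖ * ‖RC‖ := norm_mul_le _ _
            _ ≤ ‖RB‖ * ‖δ ^ 2 • (M ∘L (C - B) ∘L adjoint M)‖ * ‖RC‖ := by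
                have := norm_mul_le RB (δ ^ 2 • (M ∘L (C - B) ∘L adjoint M))
                exact mul_le_mul_of_nonneg_right this (norm_nonneg _)
        exact mul_le_mul hA1 hA2 (norm_nonneg _)
          (mul_nonneg (norm_nonneg _) (norm_nonneg _))
    _ ≤ (‖C₀‖ * ‖A‖) * (τ * (δ ^ 2 * (‖M‖ * (‖C - B‖ * ‖M‖))) * τ) := by
        have hτ0 : (0:ℝ) ≤ τ := norm_nonneg _
        have := mul_le_mul (mul_le_mul hRBn hZ (norm_nonneg _) hτ0) hRCn
          (norm_nonneg _) (by positivity)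
        exact mul_le_mul_of_nonneg_left this (by positivity)
    _ = ‖C₀‖ * ‖A‖ * τ * ‖M‖ * δ * (δ * ‖M‖ * τ * ‖C - B‖) := by ring

end KF2

/-- For `0 ≤ δ < 1/β`, with `C(δ)` the unique self-adjoint non-negative fixed point of
`F(·,δ)` and `G(m,δ) = m₀ + K(C(δ),δ)(b − A m₀ − δ M m)`, there is a unique `m(δ)` with
`m(δ) = G(m(δ),δ)`, and there is `α₂ > 0` with `‖m_ℓ(δ) − m(δ)‖ ≤ α₂ (βδ)^ℓ` for all
`ℓ ≥ 1`; in particular the means converge geometrically fast. -/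
theorem stmt_7 {X Y : Type*}
    [NormedAddCommGroup X] [InnerProductSpace ℝ X] [CompleteSpace X]
    [NormedAddCommGroup Y] [InnerProductSpace ℝ Y] [FiniteDimensional ℝ Y]
    (A M : X →L[ℝ] Y) (C₀ : X →L[ℝ] X) (Γ : Y →L[ℝ] Y)
    (m₀ : X) (b : Y)
    (hC₀ : C₀.IsPositive) (hΓ : Γ.IsPositive)
    (hΓpos : ∀ y : Y, y ≠ 0 → 0 < ⟪Γ y, y⟫)
    (β : ℝ)
    (hβ : β = ‖C₀‖ * ‖A‖ * ‖Ring.inverse (Γ + A ∘L C₀ ∘L adjoint A)‖ * ‖M‖)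
    (δ : ℝ) (hδ0 : 0 ≤ δ) (hδ1 : β * δ < 1)
    (C : X →L[ℝ] X) (hC : C.IsPositive) (hCfix : Fop A M C₀ Γ C δ = C) :
    (∃! m : X, m = m₀ + (Kop A M C₀ Γ C δ) (b - A m₀ - δ • M m)) ∧
      ∀ m : X, m = m₀ + (Kop A M C₀ Γ C δ) (b - A m₀ - δ • M m) →
        ∃ α₂ > (0 : ℝ), ∀ ℓ : ℕ, 1 ≤ ℓ →
          ‖meanIter A M C₀ Γ m₀ b δ ℓ - m‖ ≤ α₂ * (β * δ) ^ ℓ := by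
  classical
  have hβ0 : 0 ≤ β := by
    rw [hβ]; positivity
  set τ : ℝ := ‖Ring.inverse (Γ + A ∘L C₀ ∘L adjoint A)‖ with hτd
  have hτtop : τ = ‖Ring.inverse (Topop A C₀ Γ)‖ := rfl
  have hτ0 : (0:ℝ) ≤ τ := by rw [hτd]; positivity
  set q : ℝ := β * δ with hqd
  have hq0 : 0 ≤ q := mul_nonneg hβ0 hδ0
  have hq1 : q < 1 := hδ1
  have hK : ∀ B : X →L[ℝ] X, B.IsPositive → ‖Kop A M C₀ Γ B δ‖ ≤ ‖C₀‖ * ‖A‖ * τ := by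
    intro B hB
    rw [hτtop]
    exact Kop_norm_le (A := A) (M := M) hC₀ hΓ hΓpos hB δ
  have hKd : ∀ B C' : X →L[ℝ] X, B.IsPositive → C'.IsPositive →
      ‖Kop A M C₀ Γ B δ - Kop A M C₀ Γ C' δ‖ ≤ q * (δ * ‖M‖ * τ * ‖C' - B‖) := by
    intro B C' hB hC'
    have h := Kop_sub_norm_le (A := A) (M := M) hC₀ hΓ hΓpos hB hC' δ
    rw [← hτtop] at h
    calc ‖Kop A M C₀ Γ B δ - Kop A M C₀ Γ C' δ‖
        ≤ ‖C₀‖ * ‖A‖ * τ * ‖M‖ * δ * (δ * ‖M‖ * τ * ‖C' - B‖) := h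
      _ = q * (δ * ‖M‖ * τ * ‖C' - B‖) := by rw [hqd, hβ]
  have hcovpos : ∀ ℓ, (covIter A M C₀ Γ δ ℓ).IsPositive := by
    intro ℓ
    induction ℓ with
    | zero => exact hC₀
    | succ n ih =>
      show (Fop A M C₀ Γ (covIter A M C₀ Γ δ n) δ).IsPositive
      exact Fop'_isPositive (A := A) (M := M) hC₀ hΓ hΓpos ih δ
  have hcov : ∀ ℓ, ‖covIter A M C₀ Γ δ ℓ - C‖ ≤ q ^ (2 * ℓ) * ‖C₀ - C‖ := by
    intro ℓ
    induction ℓ with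
    | zero => simp [covIter]
    | succ n ih =>
      have hFdiff : covIter A M C₀ Γ δ (n + 1) - C
          = (Kop A M C₀ Γ C δ - Kop A M C₀ Γ (covIter A M C₀ Γ δ n) δ) ∘L (A ∘L C₀) := by
        conv_lhs => rw [show covIter A M C₀ Γ δ (n + 1)
            = Fop A M C₀ Γ (covIter A M C₀ Γ δ n) δ from rfl, ← hCfix]
        rw [ContinuousLinearMap.sub_comp]
        simp only [Fop]
        abel
      have hmn := hKd C (covIter A M C₀ Γ δ n) hC (hcovpos n)
      have hCn : ‖C - covIter A M C₀ Γ δ n‖ ≤ q ^ (2 * n) * ‖C₀ - C‖ := by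
        rw [norm_sub_rev]; exact ih
      calc ‖covIter A M C₀ Γ δ (n + 1) - C‖
          = ‖(Kop A M C₀ Γ C δ - Kop A M C₀ Γ (covIter A M C₀ Γ δ n) δ) ∘L (A ∘L C₀)‖ := by
            rw [hFdiff]
        _ ≤ ‖Kop A M C₀ Γ C δ - Kop A M C₀ Γ (covIter A M C₀ Γ δ n) δ‖ * ‖A ∘L C₀‖ :=
            ContinuousLinearMap.opNorm_comp_le _ _
        _ ≤ (q * (δ * ‖M‖ * τ * (q ^ (2 * n) * ‖C₀ - C‖))) * (‖A‖ * ‖C₀‖) := by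
            have hb1 : ‖Kop A M C₀ Γ C δ - Kop A M C₀ Γ (covIter A M C₀ Γ δ n) δ‖
                ≤ q * (δ * ‖M‖ * τ * (q ^ (2 * n) * ‖C₀ - C‖)) := by
              refine le_trans hmn ?_
              have : δ * ‖M‖ * τ * ‖covIter A M C₀ Γ δ n - C‖
                  ≤ δ * ‖M‖ * τ * (q ^ (2 * n) * ‖C₀ - C‖) :=
                mul_le_mul_of_nonneg_left ih
                  (by exact mul_nonneg (mul_nonneg hδ0 (norm_nonneg _)) hτ0)
              exact mul_le_mul_of_nonneg_left this hq0
            exact mul_le_mul hb1 (ContinuousLinearMap.opNorm_comp_le _ _)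
              (norm_nonneg _) (by positivity)
        _ = q ^ (2 * (n + 1)) * ‖C₀ - C‖ := by rw [hqd, hβ]; ring
  have hKCn : ‖Kop A M C₀ Γ C δ‖ ≤ ‖C₀‖ * ‖A‖ * τ := hK C hC
  have hlip : ∀ m m' : X,
      ‖(m₀ + (Kop A M C₀ Γ C δ) (b - A m₀ - δ • M m))
        - (m₀ + (Kop A M C₀ Γ C δ) (b - A m₀ - δ • M m'))‖ ≤ q * ‖m - m'‖ := by
    intro m m'
    have hdiff : (m₀ + (Kop A M C₀ Γ C δ) (b - A m₀ - δ • M m))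
        - (m₀ + (Kop A M C₀ Γ C δ) (b - A m₀ - δ • M m'))
        = (Kop A M C₀ Γ C δ) (δ • M (m' - m)) := by
      rw [add_sub_add_left_eq_sub, ← map_sub]
      congr 1
      rw [map_sub, smul_sub]
      abel
    rw [hdiff]
    calc ‖(Kop A M C₀ Γ C δ) (δ • M (m' - m))‖
        ≤ ‖Kop A M C₀ Γ C δ‖ * ‖δ • M (m' - m)‖ := le_opNorm _ _
      _ = ‖Kop A M C₀ Γ C δ‖ * (δ * ‖M (m' - m)‖) := by
          rw [norm_smul, Real.norm_eq_abs, abs_of_nonneg hδ0]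
      _ ≤ (‖C₀‖ * ‖A‖ * τ) * (δ * (‖M‖ * ‖m' - m‖)) := by
          refine mul_le_mul hKCn ?_ (by positivity) (by positivity)
          exact mul_le_mul_of_nonneg_left (M.le_opNorm (m' - m)) hδ0
      _ = q * ‖m - m'‖ := by rw [norm_sub_rev m' m, hqd, hβ]; ring
  set f : X → X := fun m => m₀ + (Kop A M C₀ Γ C δ) (b - A m₀ - δ • M m) with hfd
  have hcontr : ContractingWith (Real.toNNReal q) f := by
    constructor
    · exact Real.toNNReal_lt_one.mpr hq1
    · refine LipschitzWith.of_dist_le_mul fun m m' => ?_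
      rw [dist_eq_norm, dist_eq_norm]
      calc ‖f m - f m'‖ ≤ q * ‖m - m'‖ := hlip m m'
        _ ≤ (Real.toNNReal q : ℝ) * ‖m - m'‖ :=
            mul_le_mul_of_nonneg_right (Real.le_coe_toNNReal q) (norm_nonneg _)
  haveI : Nonempty X := ⟨0⟩
  constructor
  · refine ⟨ContractingWith.fixedPoint f hcontr, ?_, ?_⟩
    · exact (hcontr.fixedPoint_isFixedPt).symm
    · intro y hy
      exact hcontr.fixedPoint_unique (hy.symm : f y = y)
  · intro m hm
    have hmfix : m₀ + (Kop A M C₀ Γ C δ) (b - A m₀ - δ • M m) = m := hm.symm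
    set E0 : ℝ := ‖m₀ - m‖ with hE0
    set Rw : ℝ := ‖b - A m₀ - δ • M m‖ with hRw
    set Qc : ℝ := δ * ‖M‖ * τ * ‖C₀ - C‖ with hQc
    have hQc0 : 0 ≤ Qc := by
      rw [hQc]
      exact mul_nonneg (mul_nonneg (mul_nonneg hδ0 (norm_nonneg _)) hτ0) (norm_nonneg _)
    have hRw0 : 0 ≤ Rw := norm_nonneg _
    have hE00 : 0 ≤ E0 := norm_nonneg _
    have key : ∀ ℓ, ‖meanIter A M C₀ Γ m₀ b δ ℓ - m‖
        ≤ q ^ ℓ * (E0 + Qc * Rw * (∑ j ∈ Finset.range ℓ, q ^ j)) := by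
      intro ℓ
      induction ℓ with
      | zero => simp [meanIter, hE0]
      | succ n ih =>
        have hid : meanIter A M C₀ Γ m₀ b δ (n + 1) - m
            = (Kop A M C₀ Γ (covIter A M C₀ Γ δ n) δ - Kop A M C₀ Γ C δ)
                (b - A m₀ - δ • M m)
              + (Kop A M C₀ Γ (covIter A M C₀ Γ δ n) δ)
                (δ • M (m - meanIter A M C₀ Γ m₀ b δ n)) := by
          have huw : δ • M (m - meanIter A M C₀ Γ m₀ b δ n)
              = (b - A m₀ - δ • M (meanIter A M C₀ Γ m₀ b δ n))
                - (b - A m₀ - δ • M m) := by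
            rw [map_sub, smul_sub]; abel
          conv_lhs => rw [show meanIter A M C₀ Γ m₀ b δ (n + 1)
              = m₀ + (Kop A M C₀ Γ (covIter A M C₀ Γ δ n) δ)
                (b - A m₀ - δ • M (meanIter A M C₀ Γ m₀ b δ n)) from rfl]
          conv_lhs => rw [← hmfix]
          rw [huw]
          simp only [map_sub, ContinuousLinearMap.sub_apply, smul_sub]
          abel
        have hKdn := hKd (covIter A M C₀ Γ δ n) C (hcovpos n) hC
        have hCn : ‖C - covIter A M C₀ Γ δ n‖ ≤ q ^ (2 * n) * ‖C₀ - C‖ := by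
          rw [norm_sub_rev]; exact hcov n
        have h1 : ‖(Kop A M C₀ Γ (covIter A M C₀ Γ δ n) δ - Kop A M C₀ Γ C δ)
              (b - A m₀ - δ • M m)‖ ≤ q ^ (2 * n + 1) * (Qc * Rw) := by
          calc ‖(Kop A M C₀ Γ (covIter A M C₀ Γ δ n) δ - Kop A M C₀ Γ C δ)
                (b - A m₀ - δ • M m)‖
              ≤ ‖Kop A M C₀ Γ (covIter A M C₀ Γ δ n) δ - Kop A M C₀ Γ C δ‖ * Rw :=
                le_opNorm _ _
            _ ≤ (q * (δ * ‖M‖ * τ * (q ^ (2 * n) * ‖C₀ - C‖))) * Rw := by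
                refine mul_le_mul_of_nonneg_right (le_trans hKdn ?_) hRw0
                refine mul_le_mul_of_nonneg_left ?_ hq0
                exact mul_le_mul_of_nonneg_left hCn
                  (mul_nonneg (mul_nonneg hδ0 (norm_nonneg _)) hτ0)
            _ = q ^ (2 * n + 1) * (Qc * Rw) := by rw [hQc]; ring
        have h2 : ‖(Kop A M C₀ Γ (covIter A M C₀ Γ δ n) δ)
              (δ • M (m - meanIter A M C₀ Γ m₀ b δ n))‖
            ≤ q * (q ^ n * (E0 + Qc * Rw * (∑ j ∈ Finset.range n, q ^ j))) := by
          calc ‖(Kop A M C₀ Γ (covIter A M C₀ Γ δ n) δ)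
                (δ • M (m - meanIter A M C₀ Γ m₀ b δ n))‖
              ≤ ‖Kop A M C₀ Γ (covIter A M C₀ Γ δ n) δ‖
                * ‖δ • M (m - meanIter A M C₀ Γ m₀ b δ n)‖ := le_opNorm _ _
            _ ≤ (‖C₀‖ * ‖A‖ * τ) * (δ * (‖M‖ * ‖m - meanIter A M C₀ Γ m₀ b δ n‖)) := by
                refine mul_le_mul (hK _ (hcovpos n)) ?_ (norm_nonneg _) (by positivity)
                rw [norm_smul, Real.norm_eq_abs, abs_of_nonneg hδ0]
                exact mul_le_mul_of_nonneg_left (M.le_opNorm _) hδ0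
            _ ≤ (‖C₀‖ * ‖A‖ * τ * δ * ‖M‖)
                * (q ^ n * (E0 + Qc * Rw * (∑ j ∈ Finset.range n, q ^ j))) := by
                have hmm : ‖m - meanIter A M C₀ Γ m₀ b δ n‖
                    ≤ q ^ n * (E0 + Qc * Rw * (∑ j ∈ Finset.range n, q ^ j)) := by
                  rw [norm_sub_rev]; exact ih
                calc (‖C₀‖ * ‖A‖ * τ) * (δ * (‖M‖ * ‖m - meanIter A M C₀ Γ m₀ b δ n‖))
                    ≤ (‖C₀‖ * ‖A‖ * τ) * (δ * (‖M‖
                      * (q ^ n * (E0 + Qc * Rw * (∑ j ∈ Finset.range n, q ^ j))))) := by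
                      refine mul_le_mul_of_nonneg_left ?_ (by positivity)
                      refine mul_le_mul_of_nonneg_left ?_ hδ0
                      exact mul_le_mul_of_nonneg_left hmm (norm_nonneg _)
                  _ = (‖C₀‖ * ‖A‖ * τ * δ * ‖M‖)
                      * (q ^ n * (E0 + Qc * Rw * (∑ j ∈ Finset.range n, q ^ j))) := by
                      ring
            _ = q * (q ^ n * (E0 + Qc * Rw * (∑ j ∈ Finset.range n, q ^ j))) := by
                rw [hqd, hβ]; ring
        calc ‖meanIter A M C₀ Γ m₀ b δ (n + 1) - m‖
            ≤ q ^ (2 * n + 1) * (Qc * Rw)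
              + q * (q ^ n * (E0 + Qc * Rw * (∑ j ∈ Finset.range n, q ^ j))) := by
              rw [hid]
              exact le_trans (norm_add_le _ _) (add_le_add h1 h2)
          _ = q ^ (n + 1) * (E0 + Qc * Rw * (∑ j ∈ Finset.range (n + 1), q ^ j)) := by
              rw [Finset.sum_range_succ]
              ring
    have h1q : (0:ℝ) < 1 - q := by linarith
    have hgs : ∀ ℓ : ℕ, (∑ j ∈ Finset.range ℓ, q ^ j) ≤ (1 - q)⁻¹ := by
      intro ℓ
      have hgm := geom_sum_mul q ℓ
      rw [inv_eq_one_div, le_div_iff₀ h1q]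
      nlinarith [pow_nonneg hq0 ℓ]
    refine ⟨E0 + Qc * Rw * (1 - q)⁻¹ + 1, ?_, fun ℓ _ => ?_⟩
    · have : 0 ≤ Qc * Rw * (1 - q)⁻¹ := by positivity
      linarith
    · calc ‖meanIter A M C₀ Γ m₀ b δ ℓ - m‖
          ≤ q ^ ℓ * (E0 + Qc * Rw * (∑ j ∈ Finset.range ℓ, q ^ j)) := key ℓ
        _ ≤ q ^ ℓ * (E0 + Qc * Rw * (1 - q)⁻¹ + 1) := by
            refine mul_le_mul_of_nonneg_left ?_ (pow_nonneg hq0 ℓ)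
            have := mul_le_mul_of_nonneg_left (hgs ℓ) (mul_nonneg hQc0 hRw0)
            linarith
        _ = (E0 + Qc * Rw * (1 - q)⁻¹ + 1) * (β * δ) ^ ℓ := by rw [← hqd]; ring
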